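/- With Ğ(y,x) as defined (the annealed overlap exponent), for any fixed y ∈ (0,1/2), the limit of ∂Ğ/∂x as x → 0⁺ equals log(2)·((1-y)·(1-log(2-2y)) - h₂(y)/2), and this quantity is strictly positive for all y ∈ (0,1/2). -/

import Mathlib

/-- Two-point (Bernoulli) Kullback–Leibler divergence (natural log). -/
noncomputable def klBer (a b : ℝ) : ℝ :=
  a * Real.log (a / b) + (1 - a) * Real.log ((1 - a) / (1 - b))

/-- Binary entropy (base 2). -/
noncomputable def binEnt (x : ℝ) : ℝ := -x * Real.logb 2 x - (1 - x) * Real.logb 2 (1 - x)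

/-- `y_{(x)} = y + (1-y)(2^{1-x} - 1)`. -/
noncomputable def yOf (y x : ℝ) : ℝ := y + (1 - y) * ((2 : ℝ) ^ (1 - x) - 1)

/-- The function `G(y, y', x)`. -/
noncomputable def Gfun (y y' x : ℝ) : ℝ :=
  x / 2 * klBer y (1 / 2) + y' * klBer (y / y') ((2 : ℝ) ^ (-(1 - x)))
    - klBer y (1 / 2) + 1 / 2 * klBer y' ((2 : ℝ) ^ (-x))

/-- `Ğ(y,x) = G(y, y_{(x)}, x)`. -/
noncomputable def Gbr (y x : ℝ) : ℝ := Gfun y (yOf y x) x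

noncomputable def Pfun (y x : ℝ) : ℝ := y + (1 - y) * (Real.exp (Real.log 2 * (1 - x)) - 1)

noncomputable def Qfun (y x : ℝ) : ℝ :=
  (1 - y) * (Real.exp (Real.log 2 * (1 - x)) * (Real.log 2 * (0 - 1)))

noncomputable def Ffun (y x : ℝ) : ℝ :=
  (x / 2 - 1) * klBer y (1 / 2) + y * Real.log y - y * Real.log (Pfun y x)
    + y * (Real.log 2 * (1 - x))
    + (Pfun y x - y) * (Real.log (1 - y) + Real.log 2 * (1 - x) - Real.log (Pfun y x))
    + 1 / 2 * (Pfun y x * Real.log (Pfun y x) + Real.log 2 * x * Pfun y x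
        + (1 - Pfun y x) * Real.log (2 * (1 - y)))

noncomputable def Dfun (y x : ℝ) : ℝ :=
  klBer y (1 / 2) / 2 - y * (Qfun y x / Pfun y x) - y * Real.log 2
    + (Qfun y x * (Real.log (1 - y) + Real.log 2 * (1 - x) - Real.log (Pfun y x))
        + (Pfun y x - y) * (-Real.log 2 - Qfun y x / Pfun y x))
    + 1 / 2 * (Qfun y x * Real.log (Pfun y x) + Pfun y x * (Qfun y x / Pfun y x)
        + (Real.log 2 * Pfun y x + Real.log 2 * x * Qfun y x)
        - Qfun y x * Real.log (2 * (1 - y)))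

lemma hasDerivAt_Pfun (y x : ℝ) : HasDerivAt (Pfun y) (Qfun y x) x := by
  have hc' : HasDerivAt (fun x : ℝ => Real.log 2 * (1 - x)) (Real.log 2 * (0 - 1)) x :=
    ((hasDerivAt_const x (1 : ℝ)).sub (hasDerivAt_id x)).const_mul (Real.log 2)
  have hE := hc'.exp
  exact ((hE.sub_const 1).const_mul (1 - y)).const_add y

lemma hasDerivAt_Ffun (y x : ℝ) (hP : Pfun y x ≠ 0) :
    HasDerivAt (Ffun y) (Dfun y x) x := by
  have hc' : HasDerivAt (fun x : ℝ => Real.log 2 * (1 - x)) (Real.log 2 * (0 - 1)) x :=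
    ((hasDerivAt_const x (1 : ℝ)).sub (hasDerivAt_id x)).const_mul (Real.log 2)
  have hPd := hasDerivAt_Pfun y x
  have hL : HasDerivAt (fun x => Real.log (Pfun y x)) (Qfun y x / Pfun y x) x := hPd.log hP
  have h1 : HasDerivAt (fun x : ℝ => (x / 2 - 1) * klBer y (1 / 2)) (klBer y (1 / 2) / 2) x := by
    have := (((hasDerivAt_id x).div_const 2).sub_const 1).mul_const (klBer y (1 / 2))
    refine this.congr_deriv ?_
    ring
  have h2 : HasDerivAt (fun _ : ℝ => y * Real.log y) 0 x := hasDerivAt_const x _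
  have h3 : HasDerivAt (fun x => y * Real.log (Pfun y x)) (y * (Qfun y x / Pfun y x)) x :=
    hL.const_mul y
  have h4 : HasDerivAt (fun x : ℝ => y * (Real.log 2 * (1 - x))) (y * Real.log 2 * (0 - 1)) x := by
    have := hc'.const_mul y
    refine this.congr_deriv ?_
    ring
  have h5 : HasDerivAt
      (fun x => (Pfun y x - y) * (Real.log (1 - y) + Real.log 2 * (1 - x) - Real.log (Pfun y x)))
      (Qfun y x * (Real.log (1 - y) + Real.log 2 * (1 - x) - Real.log (Pfun y x))
        + (Pfun y x - y) * (-Real.log 2 - Qfun y x / Pfun y x)) x := by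
    have := (hPd.sub_const y).mul
      ((((hasDerivAt_const x (Real.log (1 - y))).add hc')).sub hL)
    refine this.congr_deriv ?_
    simp only [Pi.add_apply, Pi.sub_apply]
    ring
  have h6 : HasDerivAt
      (fun x => 1 / 2 * (Pfun y x * Real.log (Pfun y x) + Real.log 2 * x * Pfun y x
        + (1 - Pfun y x) * Real.log (2 * (1 - y))))
      (1 / 2 * (Qfun y x * Real.log (Pfun y x) + Pfun y x * (Qfun y x / Pfun y x)
        + (Real.log 2 * Pfun y x + Real.log 2 * x * Qfun y x)
        - Qfun y x * Real.log (2 * (1 - y)))) x := by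
    have := (((hPd.mul hL).add
        ((((hasDerivAt_id x).const_mul (Real.log 2)).mul hPd))).add
        (((hasDerivAt_const x (1 : ℝ)).sub hPd).mul_const (Real.log (2 * (1 - y))))).const_mul
        (1 / 2 : ℝ)
    refine this.congr_deriv ?_
    simp only [id_eq]
    ring
  have key := ((((h1.add h2).sub h3).add h4).add h5).add h6
  have hfe : Ffun y = fun x => ((x / 2 - 1) * klBer y (1 / 2) + y * Real.log y
      - y * Real.log (Pfun y x) + y * (Real.log 2 * (1 - x))
      + (Pfun y x - y) * (Real.log (1 - y) + Real.log 2 * (1 - x) - Real.log (Pfun y x))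
      + 1 / 2 * (Pfun y x * Real.log (Pfun y x) + Real.log 2 * x * Pfun y x
          + (1 - Pfun y x) * Real.log (2 * (1 - y)))) := rfl
  rw [hfe]
  refine key.congr_deriv ?_
  unfold Dfun
  ring


lemma GF_eq {y x : ℝ} (hy0 : 0 < y) (hy1 : y < 1) (hx0 : 0 < x) (hx1 : x < 1) :
    Gbr y x = Ffun y x := by
  set c := Real.log 2 with hc
  have hcpos : 0 < c := Real.log_pos (by norm_num)
  set E := Real.exp (c * (1 - x)) with hE
  have hE1 : 1 < E := Real.one_lt_exp_iff.mpr (by nlinarith)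
  have hE2 : E < 2 := by
    rw [hE]
    calc Real.exp (c * (1 - x)) < Real.exp c := Real.exp_lt_exp.mpr (by nlinarith)
    _ = 2 := Real.exp_log (by norm_num)
  have hE0 : (0 : ℝ) < E := by linarith
  have hPdef : Pfun y x = y + (1 - y) * (E - 1) := rfl
  have hPpos : 0 < Pfun y x := by rw [hPdef]; nlinarith
  have hPne : Pfun y x ≠ 0 := hPpos.ne'
  have hP1 : Pfun y x < 1 := by rw [hPdef]; nlinarith
  have hyOf : yOf y x = Pfun y x := by
    rw [yOf, Pfun, Real.rpow_def_of_pos (by norm_num : (0:ℝ) < 2)]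
  have hr1 : (2 : ℝ) ^ (-(1 - x)) = E⁻¹ := by
    rw [Real.rpow_def_of_pos (by norm_num : (0:ℝ) < 2), hE, ← Real.exp_neg]
    rw [hc]
    ring_nf
  have hr2 : (2 : ℝ) ^ (-x) = E / 2 := by
    rw [Real.rpow_def_of_pos (by norm_num : (0:ℝ) < 2), hE]
    rw [show Real.exp (c * (1 - x)) / 2 = Real.exp (c * (1 - x)) / Real.exp c from by
      rw [hc, Real.exp_log]; norm_num]
    rw [← Real.exp_sub]
    rw [hc]
    ring_nf
  have hinv1 : (0 : ℝ) < 1 - E⁻¹ := by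
    have : E⁻¹ < 1 := inv_lt_one_of_one_lt₀ hE1
    linarith
  have h2E : (0 : ℝ) < 1 - E / 2 := by linarith
  have h1y : (0 : ℝ) < 1 - y := by linarith
  have l1 : Real.log (y / Pfun y x / E⁻¹) = Real.log y + c * (1 - x) - Real.log (Pfun y x) := by
    rw [show y / Pfun y x / E⁻¹ = y * E / Pfun y x from by field_simp]
    rw [Real.log_div (by positivity) hPne, Real.log_mul hy0.ne' hE0.ne', hE, Real.log_exp]
  have l2 : Real.log ((1 - y / Pfun y x) / (1 - E⁻¹))
      = Real.log (1 - y) + c * (1 - x) - Real.log (Pfun y x) := by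
    have harg : (1 - y / Pfun y x) / (1 - E⁻¹) = (1 - y) * E / Pfun y x := by
      rw [hPdef] at hPne ⊢
      have hE1' : E - 1 ≠ 0 := by linarith
      field_simp [hE0.ne', hE1']
      ring
    rw [harg, Real.log_div (by positivity) hPne, Real.log_mul h1y.ne' hE0.ne', hE, Real.log_exp]
  have l3 : Real.log (Pfun y x / (E / 2)) = Real.log (Pfun y x) + c * x := by
    rw [Real.log_div hPne (by positivity), Real.log_div hE0.ne' (by norm_num : (2:ℝ) ≠ 0),
      hE, Real.log_exp, ← hc]
    ring
  have l4 : Real.log ((1 - Pfun y x) / (1 - E / 2)) = Real.log (2 * (1 - y)) := by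
    have harg : (1 - Pfun y x) / (1 - E / 2) = 2 * (1 - y) := by
      rw [hPdef]
      have h2E' : (2:ℝ) - E ≠ 0 := by linarith
      field_simp [h2E']
      ring
    rw [harg]
  simp only [Gbr, Gfun, hyOf, hr1, hr2, klBer, Ffun, ← hc]
  rw [l1, l2, l3, l4]
  field_simp
  ring

lemma Pfun_zero (y : ℝ) : Pfun y 0 = 1 := by
  unfold Pfun
  rw [show (1:ℝ) - 0 = 1 by norm_num, mul_one, Real.exp_log (by norm_num : (0:ℝ) < 2)]
  ring

lemma Dfun_zero {y : ℝ} (hy0 : 0 < y) (hy : y < 1/2) :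
    Dfun y 0 = Real.log 2 * ((1 - y) * (1 - Real.log (2 - 2 * y)) - binEnt y / 2) := by
  have h1y : (0:ℝ) < 1 - y := by linarith
  have hP0 := Pfun_zero y
  have hQ0 : Qfun y 0 = (1 - y) * (2 * (Real.log 2 * (0 - 1))) := by
    unfold Qfun
    rw [show (1:ℝ) - 0 = 1 by norm_num, mul_one, Real.exp_log (by norm_num : (0:ℝ) < 2)]
  have hl2 : Real.log 2 ≠ 0 := by positivity
  have e2 : Real.log (2 * (1 - y)) = Real.log 2 + Real.log (1 - y) :=
    Real.log_mul (by norm_num) h1y.ne'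
  have e1 : Real.log (2 - 2*y) = Real.log 2 + Real.log (1 - y) := by
    rw [show (2 - 2*y : ℝ) = 2*(1-y) by ring, e2]
  have e3 : Real.log (y / (1/2)) = Real.log 2 + Real.log y := by
    rw [show y / (1/2) = 2 * y by ring, Real.log_mul (by norm_num) hy0.ne']
  have e4 : Real.log ((1 - y) / (1 - 1/2)) = Real.log 2 + Real.log (1 - y) := by
    rw [show (1 - y) / (1 - 1/2) = 2 * (1 - y) by ring, e2]
  unfold Dfun klBer binEnt
  rw [hP0, hQ0, Real.log_one, e1, e2, e3, e4]
  simp only [Real.logb]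
  field_simp
  ring

lemma Dfun_contAt (y : ℝ) : ContinuousAt (Dfun y) 0 := by
  have hP0 := Pfun_zero y
  have hPc : Continuous (Pfun y) := by unfold Pfun; fun_prop
  have hQc : Continuous (Qfun y) := by unfold Qfun; fun_prop
  have hPne : Pfun y 0 ≠ 0 := by rw [hP0]; norm_num
  have hPat : ContinuousAt (Pfun y) 0 := hPc.continuousAt
  have hQat : ContinuousAt (Qfun y) 0 := hQc.continuousAt
  have hLat : ContinuousAt (fun x => Real.log (Pfun y x)) 0 := hPat.log hPne
  have hdiv : ContinuousAt (fun x => Qfun y x / Pfun y x) 0 := hQat.div hPat hPne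
  unfold Dfun
  exact ((((continuousAt_const.sub (continuousAt_const.mul hdiv)).sub continuousAt_const).add
      ((hQat.mul ((continuousAt_const.add
          (continuousAt_const.mul (continuousAt_const.sub continuousAt_id))).sub hLat)).add
        ((hPat.sub continuousAt_const).mul (continuousAt_const.sub hdiv)))).add
      (continuousAt_const.mul ((((hQat.mul hLat).add (hPat.mul hdiv)).add
        ((continuousAt_const.mul hPat).add ((continuousAt_const.mul continuousAt_id).mul hQat))).sub
        (hQat.mul continuousAt_const))))

lemma phi_pos {s : ℝ} (h1 : 1/2 < s) (h2 : s < 1) :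
    0 < Real.log 2 * s * (1 - Real.log 2) + (1/2 - Real.log 2) * (s * Real.log s)
      + (1/2) * ((1-s) * Real.log (1-s)) := by
  set c := Real.log 2 with hcdef
  have hc : 0 < c := Real.log_pos (by norm_num)
  have hc1 : c < 1 := by
    have := Real.log_lt_sub_one_of_pos (by norm_num : (0:ℝ) < 2) (by norm_num)
    linarith
  set φ : ℝ → ℝ := fun s => c*s*(1-c) + (1/2-c)*(s*Real.log s) + (1/2)*((1-s)*Real.log (1-s))
    with hφdef
  have hφcont : Continuous φ := by
    apply Continuous.add
    apply Continuous.add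
    · fun_prop
    · exact continuous_const.mul Real.continuous_mul_log
    · exact continuous_const.mul (Real.continuous_mul_log.comp (continuous_const.sub continuous_id))
  have hφd : ∀ t ∈ Set.Ioo (1/2:ℝ) 1, HasDerivAt φ
      (-c^2 + (1/2-c)*Real.log t - (1/2)*Real.log (1-t)) t := by
    intro t ht
    have ht0 : (0:ℝ) < t := by linarith [ht.1]
    have ht1 : (0:ℝ) < 1 - t := by linarith [ht.2]
    have hA : HasDerivAt (fun t : ℝ => t * Real.log t) (1 * Real.log t + t * t⁻¹) t :=
      (hasDerivAt_id t).mul (Real.hasDerivAt_log ht0.ne')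
    have hB0 : HasDerivAt (fun t : ℝ => 1 - t) (0 - 1) t :=
      (hasDerivAt_const t 1).sub (hasDerivAt_id t)
    have hB : HasDerivAt (fun t : ℝ => (1-t) * Real.log (1-t))
        ((0-1) * Real.log (1-t) + (1-t) * ((0-1)/(1-t))) t :=
      hB0.mul (hB0.log ht1.ne')
    have h := (((hasDerivAt_const t (c*(1-c))).mul (hasDerivAt_id t)).add
        (hA.const_mul (1/2-c))).add (hB.const_mul (1/2))
    have heq : (-c^2 + (1/2-c)*Real.log t - (1/2)*Real.log (1-t)) =
        (0 * t + c*(1-c) * 1 + (1/2-c) * (1 * Real.log t + t * t⁻¹)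
          + 1/2 * ((0-1) * Real.log (1-t) + (1-t) * ((0-1)/(1-t)))) := by
      field_simp
      ring
    rw [heq]
    convert h using 1
    · rfl
    · rfl
    funext u
    simp [hφdef]
    ring
    rfl
  have hmono : StrictMonoOn φ (Set.Icc (1/2) 1) := by
    apply strictMonoOn_of_deriv_pos (convex_Icc _ _) hφcont.continuousOn
    intro t ht
    rw [interior_Icc] at ht
    rw [(hφd t ht).deriv]
    have ht0 : (0:ℝ) < t := by linarith [ht.1]
    have ht1 : (0:ℝ) < 1 - t := by linarith [ht.2]
    have key1 : Real.log t < 2*t - 1 - c := by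
      have h := Real.log_lt_sub_one_of_pos (by linarith : (0:ℝ) < 2*t)
        (by obtain ⟨a,b⟩ := ht; intro h; linarith)
      rw [Real.log_mul (by norm_num) ht0.ne'] at h
      linarith
    have key2 : Real.log (1-t) ≤ 2*(1-t) - 1 - c := by
      have h := Real.log_le_sub_one_of_pos (by linarith : (0:ℝ) < 2*(1-t))
      rw [Real.log_mul (by norm_num) ht1.ne'] at h
      linarith
    have hc2 : (1/2:ℝ) - c < 0 := by
      have := Real.log_two_gt_d9
      simp only [hcdef]
      linarith
    have hk := mul_lt_mul_of_neg_left key1 hc2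
    nlinarith [hk, key2, ht.1, ht.2, hc, hc1]
  have hhalf : φ (1/2) = 0 := by
    simp only [hφdef]
    rw [show ((1:ℝ) - 1/2) = 1/2 by norm_num, show ((1:ℝ)/2) = 2⁻¹ by norm_num, Real.log_inv]
    ring
  have := hmono (Set.mem_Icc.mpr ⟨le_rfl, by norm_num⟩)
    (Set.mem_Icc.mpr ⟨h1.le, h2.le⟩) h1
  rw [hhalf] at this
  exact this

lemma target_pos {y : ℝ} (hy0 : 0 < y) (hy : y < 1/2) :
    0 < Real.log 2 * ((1 - y) * (1 - Real.log (2 - 2 * y)) - binEnt y / 2) := by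
  have h := phi_pos (s := 1-y) (by linarith) (by linarith)
  simp only [show (1:ℝ)-(1-y) = y from by ring] at h
  have hl2 : Real.log 2 ≠ 0 := by positivity
  have e1 : Real.log (2-2*y) = Real.log 2 + Real.log (1-y) := by
    rw [show (2-2*y:ℝ) = 2*(1-y) by ring, Real.log_mul (by norm_num) (by linarith)]
  have key : Real.log 2 * ((1 - y) * (1 - Real.log (2 - 2 * y)) - binEnt y / 2)
      = Real.log 2 * (1-y) * (1 - Real.log 2) + (1/2 - Real.log 2) * ((1-y) * Real.log (1-y))
      + (1/2) * (y * Real.log y) := by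
    simp only [binEnt, Real.logb, e1]
    field_simp
    ring
  rw [key]; exact h

theorem Gbr_deriv_limit_at_zero (y : ℝ) (hy0 : 0 < y) (hy : y < 1 / 2) :
    Filter.Tendsto (fun x => deriv (Gbr y) x) (nhdsWithin 0 (Set.Ioi 0))
      (nhds (Real.log 2 * ((1 - y) * (1 - Real.log (2 - 2 * y)) - binEnt y / 2))) ∧
    0 < Real.log 2 * ((1 - y) * (1 - Real.log (2 - 2 * y)) - binEnt y / 2) := by
  constructor
  · have hy1 : y < 1 := by linarith
    have hDval := Dfun_zero hy0 hy
    have hcont : Filter.Tendsto (Dfun y) (nhds 0) (nhds (Dfun y 0)) := (Dfun_contAt y).tendsto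
    have hmem : Set.Ioo (0:ℝ) 1 ∈ nhdsWithin (0:ℝ) (Set.Ioi 0) :=
      Ioo_mem_nhdsGT_of_mem ⟨le_rfl, by norm_num⟩
    have hev : (fun x => Dfun y x) =ᶠ[nhdsWithin (0:ℝ) (Set.Ioi 0)]
        (fun x => deriv (Gbr y) x) := by
      filter_upwards [hmem] with u hu
      have hder : deriv (Gbr y) u = deriv (Ffun y) u := by
        apply Filter.EventuallyEq.deriv_eq
        filter_upwards [isOpen_Ioo.mem_nhds hu] with v hv
        exact GF_eq hy0 hy1 hv.1 hv.2
      have hPne : Pfun y u ≠ 0 := by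
        have h1 : (1:ℝ) ≤ Real.exp (Real.log 2 * (1 - u)) := by
          apply Real.one_le_exp
          have := Real.log_pos (show (1:ℝ) < 2 by norm_num)
          nlinarith [hu.2]
        unfold Pfun
        nlinarith [hu.1, hu.2]
      rw [hder, (hasDerivAt_Ffun y u hPne).deriv]
    have h := (hcont.mono_left nhdsWithin_le_nhds).congr' hev
    rwa [hDval] at h
  · exact target_pos hy0 hy
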